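/- Let A be a positive definite real symmetric n×n matrix with smallest eigenvalue λ₁, M a metric space, h : ℝⁿ × M → ℝⁿ continuous and componentwise in x, satisfying (A3): ⟨h(z,v),z⟩ ≤ ν|z|^μ for |z| ≥ θ₁ with μ < 2, ν, θ₁ > 0; (A4): (hₖ(z₁,v)-hₖ(z₂,v))(z₁-z₂) ≤ b|z₁-z₂|² with b > 0; and h(0,u) ≠ 0 for all u. Fix λ ∈ (0, λ₁/b). If uₖ → ū in M and xₖ are the unique solutions of A xₖ = λ h(xₖ, uₖ), then (xₖ) has a convergent subsequence whose limit x̄ satisfies A x̄ = λ h(x̄, ū). -/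

import Mathlib

open scoped InnerProductSpace
open Filter Topology

theorem stmt9 (n : ℕ) (hn : 0 < n) (M : Type*) [MetricSpace M]
    (A : Matrix (Fin n) (Fin n) ℝ) (hApd : A.PosDef)
    (l1 : ℝ) (hl1 : l1 = ⨅ i, hApd.1.eigenvalues i) (hl1pos : 0 < l1)
    (hs : Fin n → ℝ → M → ℝ)
    (hcont : ∀ k, Continuous fun p : ℝ × M => hs k p.1 p.2)
    (h : EuclideanSpace ℝ (Fin n) → M → EuclideanSpace ℝ (Fin n))
    (hdef : ∀ x u k, h x u k = hs k (x k) u)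
    (μ ν θ₁ : ℝ) (hμ : μ < 2) (hν : 0 < ν) (hθ₁ : 0 < θ₁)
    (hA3 : ∀ (z : EuclideanSpace ℝ (Fin n)) (v : M), θ₁ ≤ ‖z‖ →
      ⟪h z v, z⟫_ℝ ≤ ν * ‖z‖ ^ μ)
    (b : ℝ) (hb : 0 < b)
    (hA4 : ∀ (k : Fin n) (z₁ z₂ : ℝ) (v : M),
      (hs k z₁ v - hs k z₂ v) * (z₁ - z₂) ≤ b * |z₁ - z₂| ^ 2)
    (h0 : ∀ u : M, h 0 u ≠ 0)
    (lam : ℝ) (hlam0 : 0 < lam) (hlam : lam < l1 / b)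
    (u : ℕ → M) (ub : M) (hu : Tendsto u atTop (𝓝 ub))
    (x : ℕ → EuclideanSpace ℝ (Fin n))
    (hx : ∀ k, Matrix.toEuclideanCLM (𝕜 := ℝ) A (x k) = lam • h (x k) (u k)) :
    ∃ (φ : ℕ → ℕ) (xb : EuclideanSpace ℝ (Fin n)), StrictMono φ ∧
      Tendsto (x ∘ φ) atTop (𝓝 xb) ∧
      Matrix.toEuclideanCLM (𝕜 := ℝ) A xb = lam • h xb ub := by
  classical
  let E := EuclideanSpace ℝ (Fin n)
  set T := Matrix.toEuclideanCLM (𝕜 := ℝ) A with hT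
  -- positivity of the quadratic form
  have hpos : ∀ z : E, z ≠ 0 → 0 < ⟪T z, z⟫_ℝ := by
    intro z hz
    have hz' : (WithLp.equiv 2 (Fin n → ℝ)) z ≠ 0 := by
      simpa using hz
    have hd := hApd.re_dotProduct_pos (x := (WithLp.equiv 2 (Fin n → ℝ)) z) hz'
    rw [EuclideanSpace.inner_eq_star_dotProduct]
    simp only [hT, Matrix.ofLp_toEuclideanCLM, Matrix.toLin'_apply]
    simpa using hd
  -- continuity of the quadratic form
  have hfc : Continuous fun z : E => ⟪T z, z⟫_ℝ := T.continuous.inner continuous_id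
  -- nontriviality
  have hne : (Metric.sphere (0 : E) 1).Nonempty := by
    haveI : Nontrivial E := by
      refine ⟨EuclideanSpace.single ⟨0, hn⟩ (1 : ℝ), 0, fun hcc => ?_⟩
      have h1 : ‖EuclideanSpace.single (⟨0, hn⟩ : Fin n) (1 : ℝ)‖ = 1 := by
        simp [EuclideanSpace.norm_single]
      rw [hcc] at h1
      simp at h1
    exact NormedSpace.sphere_nonempty.2 zero_le_one
  obtain ⟨z₀, hz₀, hz₀min⟩ := (isCompact_sphere (0 : E) 1).exists_isMinOn hne hfc.continuousOn
  have hz₀norm : ‖z₀‖ = 1 := by simpa using hz₀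
  set c : ℝ := ⟪T z₀, z₀⟫_ℝ with hc
  have hcpos : 0 < c := hpos z₀ (by intro hzz; simp [hzz] at hz₀norm)
  -- coercivity
  have hcoer : ∀ z : E, c * ‖z‖ ^ 2 ≤ ⟪T z, z⟫_ℝ := by
    intro z
    rcases eq_or_ne z 0 with rfl | hz
    · simp
    · have hr : 0 < ‖z‖ := norm_pos_iff.2 hz
      set y : E := ‖z‖⁻¹ • z with hy
      have hyn : ‖y‖ = 1 := by
        rw [hy, norm_smul]; simp [abs_of_pos hr, inv_mul_cancel₀ hr.ne']
      have h1 : c ≤ ⟪T y, y⟫_ℝ := hz₀min (by simpa using hyn)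
      have h2 : ⟪T y, y⟫_ℝ = ‖z‖⁻¹ * (‖z‖⁻¹ * ⟪T z, z⟫_ℝ) := by
        rw [hy, map_smul, real_inner_smul_left, real_inner_smul_right]
      have h3 : ⟪T z, z⟫_ℝ = ‖z‖ ^ 2 * ⟪T y, y⟫_ℝ := by
        rw [h2]; field_simp
      rw [h3]
      nlinarith [sq_nonneg ‖z‖]
  -- uniform bound on x k
  set R : ℝ := max θ₁ ((lam * ν / c) ^ (1 / (2 - μ))) with hR
  have hμ2 : (0:ℝ) < 2 - μ := by linarith
  have hbound : ∀ k, ‖x k‖ ≤ R := by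
    intro k
    rcases le_or_gt ‖x k‖ θ₁ with hle | hgt
    · exact hle.trans (le_max_left _ _)
    · set t := ‖x k‖ with ht
      have ht0 : 0 < t := hθ₁.trans hgt
      have key : c * t ^ 2 ≤ lam * (ν * t ^ μ) := by
        have h1 := hcoer (x k)
        rw [hx k, real_inner_smul_left] at h1
        have h2 := hA3 (x k) (u k) hgt.le
        nlinarith
      have htμ : 0 < t ^ μ := Real.rpow_pos_of_pos ht0 μ
      have hrp : t ^ ((2 : ℝ) - μ) ≤ lam * ν / c := by
        have hts : t ^ ((2:ℝ) - μ) = t ^ (2:ℕ) / t ^ μ := by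
          rw [Real.rpow_sub ht0, ← Real.rpow_natCast t 2]; norm_num
        rw [hts, div_le_div_iff₀ htμ hcpos]
        nlinarith
      have hfin : t ≤ (lam * ν / c) ^ (1 / (2 - μ)) := by
        have h3 := Real.rpow_le_rpow (Real.rpow_nonneg ht0.le _) hrp
          (le_of_lt (by positivity : (0:ℝ) < 1 / (2 - μ)))
        rwa [← Real.rpow_mul ht0.le, mul_one_div, div_self hμ2.ne',
          Real.rpow_one] at h3
      exact hfin.trans (le_max_right _ _)
  -- extract a convergent subsequence
  obtain ⟨xb, -, φ, hφ, hconv⟩ := tendsto_subseq_of_bounded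
    (Metric.isBounded_closedBall (x := (0:E)) (r := R))
    (fun k => by simpa [Metric.mem_closedBall, dist_zero_right] using hbound k)
  refine ⟨φ, xb, hφ, hconv, ?_⟩
  -- joint continuity of h
  have hH : Continuous fun p : E × M => h p.1 p.2 := by
    have heq : (fun p : E × M => h p.1 p.2)
        = fun p => (WithLp.equiv 2 (Fin n → ℝ)).symm (fun k => hs k (p.1 k) p.2) := by
      funext p
      apply PiLp.ext
      intro k
      simp [hdef]
    rw [heq]
    exact (PiLp.continuous_toLp 2 (fun _ : Fin n => ℝ)).comp
      (continuous_pi fun k => (hcont k).comp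
        (((continuous_apply k).comp
          ((PiLp.continuous_ofLp 2 (fun _ : Fin n => ℝ)).comp continuous_fst)).prodMk
          continuous_snd))
  -- pass to the limit
  have h1 : Tendsto (fun k => T ((x ∘ φ) k)) atTop (𝓝 (T xb)) :=
    (T.continuous.tendsto xb).comp hconv
  have huφ : Tendsto (u ∘ φ) atTop (𝓝 ub) := hu.comp hφ.tendsto_atTop
  have h2 : Tendsto (fun k => lam • h ((x ∘ φ) k) ((u ∘ φ) k)) atTop
      (𝓝 (lam • h xb ub)) :=
    Tendsto.const_smul ((hH.tendsto (xb, ub)).comp (hconv.prodMk_nhds huφ)) lam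
  have heq2 : (fun k => T ((x ∘ φ) k)) = fun k => lam • h ((x ∘ φ) k) ((u ∘ φ) k) :=
    funext fun k => hx (φ k)
  rw [heq2] at h1
  exact tendsto_nhds_unique h1 h2
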